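/- Let n ≥ 2 and let R be a commutative local ℂ-algebra with maximal ideal 𝔪_R such that dim_ℂ R = n+2, dim_ℂ 𝔪_R² = 1, and for every x ∈ 𝔪_R with x ∉ 𝔪_R² there exists y ∈ 𝔪_R with x·y ≠ 0. Then R is isomorphic as a ℂ-algebra to ℂ[S₁,…,Sₙ]/I, where I is the ideal generated by all SᵢSⱼ with i ≠ j together with all Sₖ² − Sₗ² (1 ≤ k, l ≤ n). In particular, any two commutative local ℂ-algebras of dimension n+2 satisfying these conditions are isomorphic. -/

import Mathlib

open MvPolynomial

/-- The ideal of `ℂ[S₁,…,Sₙ]` generated by all `SᵢSⱼ` with `i ≠ j` together with all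
`Sₖ² − Sₗ²`. -/
noncomputable def Iq (n : ℕ) : Ideal (MvPolynomial (Fin n) ℂ) :=
  Ideal.span ({p | ∃ i j : Fin n, i ≠ j ∧ p = X i * X j} ∪
    {p | ∃ k l : Fin n, p = X k ^ 2 - X l ^ 2})

/-- The algebra `ℂ[S₁,…,Sₙ]/(SᵢSⱼ (i ≠ j), Sₖ² − Sₗ²)`. -/
noncomputable abbrev Qalg (n : ℕ) : Type := MvPolynomial (Fin n) ℂ ⧸ Iq n

open IsLocalRing Module

lemma mem_Iq_mul {n : ℕ} {i j : Fin n} (h : i ≠ j) : X i * X j ∈ Iq n :=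
  Ideal.subset_span (Or.inl ⟨i, j, h, rfl⟩)

lemma mem_Iq_sq {n : ℕ} (k l : Fin n) : (X k : MvPolynomial (Fin n) ℂ) ^ 2 - X l ^ 2 ∈ Iq n :=
  Ideal.subset_span (Or.inr ⟨k, l, rfl⟩)

lemma cube_mem_Iq {n : ℕ} (hn : 2 ≤ n) (j i : Fin n) :
    (X j : MvPolynomial (Fin n) ℂ) ^ 2 * X i ∈ Iq n := by
  by_cases h : i = j
  · subst h
    haveI : Nontrivial (Fin n) := Fin.nontrivial_iff_two_le.mpr hn
    obtain ⟨l, hl⟩ := exists_ne i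
    have e : (X i : MvPolynomial (Fin n) ℂ) ^ 2 * X i =
        X i * (X i ^ 2 - X l ^ 2) + X l * (X i * X l) := by ring
    rw [e]
    exact Ideal.add_mem _ (Ideal.mul_mem_left _ _ (mem_Iq_sq _ _))
      (Ideal.mul_mem_left _ _ (mem_Iq_mul (fun hh => hl (by simp [hh]) )))
  · have e : (X j : MvPolynomial (Fin n) ℂ) ^ 2 * X i = X j * (X j * X i) := by ring
    rw [e]
    exact Ideal.mul_mem_left _ _ (mem_Iq_mul (Ne.symm h))

noncomputable def qgen (n : ℕ) : Fin (n + 2) → Qalg n := fun k =>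
  if h : (k : ℕ) < n then Ideal.Quotient.mkₐ ℂ (Iq n) (X ⟨k, h⟩)
  else if (k : ℕ) = n then Ideal.Quotient.mkₐ ℂ (Iq n) 1
  else if h0 : 0 < n then Ideal.Quotient.mkₐ ℂ (Iq n) (X (⟨0, h0⟩ : Fin n) ^ 2) else 0

lemma qgen_span (n : ℕ) (hn : 2 ≤ n) :
    Submodule.span ℂ (Set.range (qgen n)) = ⊤ := by
  have h0 : 0 < n := by omega
  rw [eq_top_iff]
  rintro q -
  obtain ⟨p, rfl⟩ : ∃ p, Ideal.Quotient.mkₐ ℂ (Iq n) p = q := Ideal.Quotient.mk_surjective q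
  set P := Submodule.span ℂ (Set.range (qgen n)) with hP
  have h1 : Ideal.Quotient.mkₐ ℂ (Iq n) 1 ∈ P := by
    apply Submodule.subset_span
    refine ⟨⟨n, by omega⟩, ?_⟩
    simp [qgen]
  have hXi : ∀ i : Fin n, Ideal.Quotient.mkₐ ℂ (Iq n) (X i) ∈ P := by
    intro i
    apply Submodule.subset_span
    refine ⟨⟨i, by omega⟩, ?_⟩
    simp [qgen, i.isLt]
  have hsq : Ideal.Quotient.mkₐ ℂ (Iq n) (X (⟨0, h0⟩ : Fin n) ^ 2) ∈ P := by
    apply Submodule.subset_span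
    refine ⟨⟨n+1, by omega⟩, ?_⟩
    simp [qgen, h0]
  have hmul : ∀ i : Fin n, ∀ q ∈ P, q * Ideal.Quotient.mkₐ ℂ (Iq n) (X i) ∈ P := by
    intro i q hq
    induction hq using Submodule.span_induction with
    | mem x hx =>
      obtain ⟨k, rfl⟩ := hx
      by_cases hk : (k:ℕ) < n
      · simp only [qgen, dif_pos hk]
        set j : Fin n := ⟨k, hk⟩
        by_cases hij : j = i
        · rw [← map_mul]
          have : Ideal.Quotient.mkₐ ℂ (Iq n) (X j * X i) =
              Ideal.Quotient.mkₐ ℂ (Iq n) (X (⟨0, h0⟩ : Fin n) ^ 2) := by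
            simp only [Ideal.Quotient.mkₐ_eq_mk]
            rw [Ideal.Quotient.eq]
            have e : (X j : MvPolynomial (Fin n) ℂ) * X i - X (⟨0, h0⟩ : Fin n) ^ 2
                = X j ^ 2 - X (⟨0, h0⟩ : Fin n) ^ 2 := by rw [← hij]; ring
            rw [e]; exact mem_Iq_sq _ _
          rw [this]; exact hsq
        · rw [← map_mul]
          have : Ideal.Quotient.mkₐ ℂ (Iq n) (X j * X i) = 0 := by
            simp only [Ideal.Quotient.mkₐ_eq_mk]
            exact Ideal.Quotient.eq_zero_iff_mem.mpr (mem_Iq_mul hij)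
          rw [this]; exact P.zero_mem
      · by_cases hk' : (k:ℕ) = n
        · simp only [qgen, dif_neg hk, if_pos hk', map_one, one_mul]
          exact hXi i
        · simp only [qgen, dif_neg hk, if_neg hk', dif_pos h0, ← map_mul]
          have : Ideal.Quotient.mkₐ ℂ (Iq n) (X (⟨0, h0⟩ : Fin n) ^ 2 * X i) = 0 := by
            simp only [Ideal.Quotient.mkₐ_eq_mk]
            exact Ideal.Quotient.eq_zero_iff_mem.mpr (cube_mem_Iq hn _ i)
          rw [this]; exact P.zero_mem
    | zero => simp
    | add a b _ _ ha hb => rw [add_mul]; exact P.add_mem ha hb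
    | smul c a _ ha => rw [smul_mul_assoc]; exact P.smul_mem c ha
  induction p using MvPolynomial.induction_on with
  | C a =>
    have : (C a : MvPolynomial (Fin n) ℂ) = a • 1 := by
      rw [Algebra.smul_def, mul_one]; rfl
    rw [this, map_smul]
    exact P.smul_mem a h1
  | add p q hp hq => rw [map_add]; exact P.add_mem hp hq
  | mul_X p i hp => rw [map_mul]; exact hmul i _ hp

lemma qalg_finite (n : ℕ) (hn : 2 ≤ n) : Module.Finite ℂ (Qalg n) :=
  Module.finite_def.mpr ⟨(Set.finite_range (qgen n)).toFinset, by
    simpa using qgen_span n hn⟩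

lemma qalg_finrank_le (n : ℕ) (hn : 2 ≤ n) : Module.finrank ℂ (Qalg n) ≤ n + 2 := by
  haveI := (Set.finite_range (qgen n)).fintype
  have h := finrank_span_le_card (R := ℂ) (Set.range (qgen n))
  rw [qgen_span n hn] at h
  calc Module.finrank ℂ (Qalg n) = Module.finrank ℂ (⊤ : Submodule ℂ (Qalg n)) :=
        (finrank_top ℂ _).symm
    _ ≤ (Set.range (qgen n)).toFinset.card := h
    _ ≤ n + 2 := by
        rw [Set.toFinset_card]
        exact (Fintype.card_range_le (qgen n)).trans (by simp)

lemma hres_ax (R : Type) [CommRing R] [IsLocalRing R] [Algebra ℂ R] [Module.Finite ℂ R] :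
    ∀ r : R, ∃ c : ℂ, r - algebraMap ℂ R c ∈ maximalIdeal R := by
  intro r
  haveI : Module.Finite ℂ (R ⧸ maximalIdeal R) := Module.Finite.quotient ℂ _
  haveI : Algebra.IsIntegral ℂ (R ⧸ maximalIdeal R) := Algebra.IsIntegral.of_finite ℂ _
  haveI : IsDomain (R ⧸ maximalIdeal R) := by
    haveI := Ideal.Quotient.field (maximalIdeal R)
    infer_instance
  obtain ⟨c, hc⟩ := (IsAlgClosed.algebraMap_bijective_of_isIntegral
    (k := ℂ) (K := R ⧸ maximalIdeal R)).2 (Ideal.Quotient.mk (maximalIdeal R) r)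
  refine ⟨c, ?_⟩
  rw [← Ideal.Quotient.eq_zero_iff_mem, map_sub, ← hc]
  have : (algebraMap ℂ (R ⧸ maximalIdeal R)) c
      = Ideal.Quotient.mk (maximalIdeal R) (algebraMap ℂ R c) := rfl
  rw [this]
  ring

lemma hm3_ax (R : Type) [CommRing R] [IsLocalRing R] [Algebra ℂ R] [Module.Finite ℂ R]
    (hm2 : Module.finrank ℂ (Submodule.restrictScalars ℂ ((maximalIdeal R) ^ 2)) = 1) :
    ∀ x ∈ maximalIdeal R, ∀ z ∈ (maximalIdeal R)^2, x * z = 0 := by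
  have hbot : (maximalIdeal R)^3 = ⊥ := by
    by_contra hne
    have hle : (maximalIdeal R)^3 ≤ (maximalIdeal R)^2 := Ideal.pow_le_pow_right (by omega)
    have hle' : Submodule.restrictScalars ℂ ((maximalIdeal R)^3 : Ideal R) ≤
        Submodule.restrictScalars ℂ ((maximalIdeal R)^2 : Ideal R) := hle
    have hne' : Submodule.restrictScalars ℂ ((maximalIdeal R)^3 : Ideal R) ≠ ⊥ := by
      intro h
      apply hne
      rwa [← Submodule.restrictScalars_eq_bot_iff (S := ℂ)]
    have hfr : 1 ≤ Module.finrank ℂ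
        (Submodule.restrictScalars ℂ ((maximalIdeal R)^3 : Ideal R)) := by
      rw [Nat.one_le_iff_ne_zero]
      intro h
      exact hne' (Submodule.finrank_eq_zero.mp h)
    have heq : Submodule.restrictScalars ℂ ((maximalIdeal R)^3 : Ideal R) =
        Submodule.restrictScalars ℂ ((maximalIdeal R)^2 : Ideal R) :=
      Submodule.eq_of_le_of_finrank_le hle' (by omega)
    have heqI : (maximalIdeal R)^3 = (maximalIdeal R)^2 :=
      Submodule.restrictScalars_injective ℂ _ _ heq
    have hsmul : ((maximalIdeal R)^2 : Ideal R) ≤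
        maximalIdeal R • ((maximalIdeal R)^2 : Ideal R) := by
      rw [Ideal.smul_eq_mul, ← pow_succ']
      exact le_of_eq heqI.symm
    have hfg : ((maximalIdeal R)^2 : Ideal R).FG := by
      haveI : IsNoetherian R R := isNoetherian_of_tower ℂ inferInstance
      exact IsNoetherian.noetherian _
    have := Submodule.eq_bot_of_le_smul_of_le_jacobson_bot (maximalIdeal R)
      ((maximalIdeal R)^2 : Ideal R) hfg hsmul
      (by rw [IsLocalRing.jacobson_eq_maximalIdeal ⊥ bot_ne_top])
    rw [this] at hm2
    have h0 := Submodule.finrank_eq_zero.mpr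
      ((Submodule.restrictScalars_eq_bot_iff (S := ℂ) (p := (⊥ : Ideal R))).mpr rfl)
    exact absurd (hm2.symm.trans h0) one_ne_zero
  intro x hx z hz
  have : x * z ∈ (maximalIdeal R)^3 := by
    have : x * z ∈ maximalIdeal R * (maximalIdeal R)^2 := Ideal.mul_mem_mul hx hz
    rwa [← pow_succ'] at this
  rw [hbot] at this
  exact this


lemma exists_good_family (n : ℕ) (hn : 2 ≤ n) (R : Type) [CommRing R] [IsLocalRing R]
    [Algebra ℂ R] [Module.Finite ℂ R]
    (hdim : Module.finrank ℂ R = n + 2)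
    (hm2 : Module.finrank ℂ
      (Submodule.restrictScalars ℂ ((maximalIdeal R) ^ 2)) = 1)
    (hpair : ∀ x ∈ maximalIdeal R, x ∉ (maximalIdeal R) ^ 2 →
      ∃ y ∈ maximalIdeal R, x * y ≠ 0)
    (hres : ∀ r : R, ∃ c : ℂ, r - algebraMap ℂ R c ∈ maximalIdeal R)
    (hm3 : ∀ x ∈ maximalIdeal R, ∀ z ∈ (maximalIdeal R)^2, x * z = 0) :
    ∃ (t : R) (x : Fin n → R), t ≠ 0 ∧ t ∈ (maximalIdeal R)^2 ∧
      (∀ i, x i ∈ maximalIdeal R) ∧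
      (∀ i j, x i * x j = if i = j then t else 0) ∧
      Submodule.span ℂ ({1} ∪ Set.range x ∪ {t}) = ⊤ := by
  classical
  set MM : Submodule ℂ R := Submodule.restrictScalars ℂ (maximalIdeal R : Ideal R) with hMM
  set M2 : Submodule ℂ R := Submodule.restrictScalars ℂ ((maximalIdeal R)^2 : Ideal R) with hM2def
  have hle : M2 ≤ MM := fun z hz => Ideal.pow_le_self two_ne_zero hz
  set M2' : Submodule ℂ MM := Submodule.comap MM.subtype M2 with hM2'
  -- finranks
  have fr_quot : finrank ℂ (R ⧸ MM) = 1 := by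
    apply finrank_eq_one (MM.mkQ 1)
    · rw [Ne, Submodule.mkQ_apply, Submodule.Quotient.mk_eq_zero]
      intro h
      exact (maximalIdeal.isMaximal R).ne_top ((Ideal.eq_top_iff_one _).mpr h)
    · intro w
      obtain ⟨r, rfl⟩ := Submodule.mkQ_surjective MM w
      obtain ⟨c, hc⟩ := hres r
      refine ⟨c, ?_⟩
      rw [← map_smul, Submodule.mkQ_apply, Submodule.mkQ_apply, Submodule.Quotient.eq]
      have h1 : c • (1:R) = algebraMap ℂ R c := (Algebra.algebraMap_eq_smul_one c).symm
      rw [h1]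
      simpa using MM.neg_mem hc
  have fr_MM : finrank ℂ MM = n + 1 := by
    have h := Submodule.finrank_quotient_add_finrank MM
    rw [fr_quot, hdim] at h
    omega
  have fr_M2' : finrank ℂ M2' = 1 := by
    rw [hM2']
    rw [LinearEquiv.finrank_eq (Submodule.comapSubtypeEquivOfLe hle)]
    exact hm2
  have fr_V : finrank ℂ (MM ⧸ M2') = n := by
    have h := Submodule.finrank_quotient_add_finrank M2'
    rw [fr_M2', fr_MM] at h
    omega
  -- basis of M2, coordinate functional
  let bt : Basis (Fin 1) ℂ M2 := basisUnique (Fin 1) hm2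
  set lam : M2 →ₗ[ℂ] ℂ := bt.coord 0 with hlamdef
  set t : M2 := bt 0 with htdef
  have hlam : ∀ z : M2, lam z • t = z := by
    intro z
    have := bt.sum_repr z
    rw [hlamdef, htdef, Module.Basis.coord_apply]
    simpa [Fin.sum_univ_one] using this
  have hlam0 : ∀ z : M2, lam z = 0 → z = 0 := by
    intro z h
    rw [← hlam z, h, zero_smul]
  have ht0 : t ≠ 0 := bt.ne_zero 0
  -- bilinear form on MM
  have hmulmem : ∀ x y : MM, (x : R) * y ∈ M2 := by
    intro x y
    have := Ideal.mul_mem_mul (x.2 : (x:R) ∈ maximalIdeal R) (y.2 : (y:R) ∈ maximalIdeal R)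
    rwa [← pow_two] at this
  set Bmul : MM →ₗ[ℂ] MM →ₗ[ℂ] M2 := LinearMap.mk₂ ℂ (fun x y => ⟨(x:R) * y, hmulmem x y⟩)
    (fun x x' y => by ext; simp [add_mul])
    (fun c x y => by ext; simp [smul_mul_assoc])
    (fun x y y' => by ext; simp [mul_add])
    (fun c x y => by ext; simp [mul_smul_comm]) with hBmuldef
  set B : MM →ₗ[ℂ] MM →ₗ[ℂ] ℂ := Bmul.compr₂ lam with hBdef
  have hBapp : ∀ x y : MM, B x y = lam ⟨(x:R) * y, hmulmem x y⟩ := fun x y => rfl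
  have hBzero : ∀ x y : MM, (x : R) ∈ (maximalIdeal R)^2 → B x y = 0 := by
    intro x y hx
    rw [hBapp]
    have : (x:R) * y = 0 := by rw [mul_comm]; exact hm3 y y.2 x hx
    have hz : (⟨(x:R) * y, hmulmem x y⟩ : M2) = 0 := Subtype.ext this
    rw [hz, map_zero]
  -- descend to V
  have hker1 : M2' ≤ LinearMap.ker B := by
    intro x hx
    rw [LinearMap.mem_ker]
    ext y
    simp only [LinearMap.zero_apply]
    exact hBzero x y hx
  set B1 : (MM ⧸ M2') →ₗ[ℂ] (MM →ₗ[ℂ] ℂ) := M2'.liftQ B hker1 with hB1def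
  have hker2 : M2' ≤ LinearMap.ker B1.flip := by
    intro x hx
    rw [LinearMap.mem_ker]
    ext v
    simp only [LinearMap.comp_apply, Submodule.mkQ_apply, LinearMap.flip_apply,
      LinearMap.zero_apply]
    rw [hB1def, Submodule.liftQ_apply, hBapp]
    have hz : (⟨(v:R) * x, hmulmem v x⟩ : M2) = 0 :=
      Subtype.ext (hm3 v v.2 x (Submodule.mem_comap.mp hx))
    rw [hz, map_zero]
  set Bq : (MM ⧸ M2') →ₗ[ℂ] (MM ⧸ M2') →ₗ[ℂ] ℂ := M2'.liftQ B1.flip hker2 with hBqdef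
  have hBq : ∀ x y : MM, Bq (Submodule.Quotient.mk x) (Submodule.Quotient.mk y)
      = lam ⟨(x:R) * y, hmulmem x y⟩ := by
    intro x y
    rw [hBqdef]
    show B1.flip x (Submodule.Quotient.mk y) = _
    rw [LinearMap.flip_apply, hB1def, Submodule.liftQ_apply, hBapp]
    congr 1
    exact Subtype.ext (mul_comm _ _)
  have hsymm : Bq.IsSymm := by
    refine ⟨fun v w => ?_⟩
    obtain ⟨x, rfl⟩ := Submodule.Quotient.mk_surjective M2' v
    obtain ⟨y, rfl⟩ := Submodule.Quotient.mk_surjective M2' w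
    rw [RingHom.id_apply, hBq x y, hBq y x]
    congr 1
    exact Subtype.ext (mul_comm _ _)
  haveI : Invertible (2:ℂ) := invertibleOfNonzero two_ne_zero
  obtain ⟨bv0, hbv0⟩ := LinearMap.BilinForm.exists_orthogonal_basis hsymm
  set bv : Basis (Fin n) ℂ (MM ⧸ M2') := bv0.reindex (finCongr fr_V) with hbvdef
  have hbv : ∀ i j : Fin n, i ≠ j → Bq (bv i) (bv j) = 0 := by
    intro i j hij
    rw [hbvdef, Basis.reindex_apply, Basis.reindex_apply]
    exact hbv0 (fun h => hij (by simpa using congrArg (finCongr fr_V) h))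
  -- diagonal is nonzero
  have hdiag : ∀ i : Fin n, Bq (bv i) (bv i) ≠ 0 := by
    intro i hzero
    obtain ⟨u, hu⟩ := Submodule.Quotient.mk_surjective M2' (bv i)
    have hunot : (u:R) ∉ (maximalIdeal R)^2 := by
      intro hmem
      have : Submodule.Quotient.mk (p := M2') u = 0 :=
        (Submodule.Quotient.mk_eq_zero _).mpr (Submodule.mem_comap.mpr hmem)
      rw [hu] at this
      exact bv.ne_zero i this
    obtain ⟨y, hy, hxy⟩ := hpair (u:R) u.2 hunot
    set w : MM := ⟨y, hy⟩ with hwdef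
    have hne : Bq (bv i) (Submodule.Quotient.mk w) ≠ 0 := by
      rw [← hu, hBq]
      intro h
      have := hlam0 _ h
      rw [Subtype.ext_iff] at this
      exact hxy this
    -- expand mk w in the basis
    apply hne
    have hrep := bv.sum_repr (Submodule.Quotient.mk w)
    rw [← hrep, map_sum]
    apply Finset.sum_eq_zero
    intro j _
    rw [map_smul]
    by_cases hij : j = i
    · rw [hij, hzero, smul_zero]
    · rw [hbv i j (Ne.symm hij), smul_zero]
  -- rescale
  have hsqrt : ∀ i : Fin n, ∃ c : ℂ, c^2 = (Bq (bv i) (bv i))⁻¹ :=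
    fun i => IsAlgClosed.exists_pow_nat_eq _ (by norm_num)
  choose c hc using hsqrt
  have hcne : ∀ i, c i ≠ 0 := by
    intro i hci
    have := hc i
    rw [hci] at this
    simp only [ne_eq, zero_pow, OfNat.ofNat_ne_zero, not_false_eq_true] at this
    exact hdiag i (by
      have := this.symm
      rwa [inv_eq_zero] at this)
  set cu : Fin n → ℂˣ := fun i => Units.mk0 (c i) (hcne i) with hcudef
  set bw : Basis (Fin n) ℂ (MM ⧸ M2') := bv.unitsSMul cu with hbwdef
  have hbw_apply : ∀ i, bw i = c i • bv i := fun i => bv.unitsSMul_apply i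
  have hbw : ∀ i j : Fin n, Bq (bw i) (bw j) = if i = j then 1 else 0 := by
    intro i j
    rw [hbw_apply, hbw_apply, map_smul, LinearMap.map_smul₂, smul_eq_mul, smul_eq_mul]
    by_cases hij : i = j
    · subst hij
      rw [if_pos rfl, ← mul_assoc, ← pow_two, hc i, inv_mul_cancel₀ (hdiag i)]
    · rw [if_neg hij, hbv i j hij, mul_zero, mul_zero]
  -- lift the basis
  have hlift : ∀ i : Fin n, ∃ u : MM, Submodule.Quotient.mk u = bw i :=
    fun i => Submodule.Quotient.mk_surjective M2' (bw i)
  choose u hu using hlift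
  refine ⟨(t:R), fun i => (u i : R), ?_, t.2, fun i => (u i).2, ?_, ?_⟩
  · intro h
    exact ht0 (Subtype.ext h)
  · intro i j
    have h1 : lam ⟨(u i:R) * (u j), hmulmem (u i) (u j)⟩ = if i = j then 1 else 0 := by
      rw [← hBq, hu, hu, hbw]
    have h2 := hlam ⟨(u i:R) * (u j), hmulmem (u i) (u j)⟩
    rw [h1] at h2
    rw [Subtype.ext_iff] at h2
    by_cases hij : i = j
    · rw [if_pos hij]
      rw [if_pos hij, one_smul] at h2
      exact h2.symm
    · rw [if_neg hij]
      rw [if_neg hij, zero_smul] at h2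
      exact h2.symm
  · -- spanning
    rw [eq_top_iff]
    rintro r -
    set S : Set R := {1} ∪ Set.range (fun i => (u i : R)) ∪ {(t:R)} with hSdef
    obtain ⟨cr, hcr⟩ := hres r
    set a : MM := ⟨r - algebraMap ℂ R cr, hcr⟩ with hadef
    set d := bw.repr (Submodule.Quotient.mk a) with hddef
    set s : MM := ∑ i, d i • u i with hsdef
    have hmk : Submodule.Quotient.mk (p := M2') s = Submodule.Quotient.mk a := by
      rw [hsdef]
      have : Submodule.Quotient.mk (p := M2') (∑ i, d i • u i)
          = ∑ i, d i • (Submodule.Quotient.mk (p := M2') (u i)) := by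
        rw [← Submodule.mkQ_apply, map_sum]
        simp [Submodule.mkQ_apply]
      rw [this]
      conv_rhs => rw [← bw.sum_repr (Submodule.Quotient.mk a)]
      exact Finset.sum_congr rfl (fun i _ => by rw [hu i])
    have hmem2 : (a : R) - s ∈ M2 := by
      have := (Submodule.Quotient.eq M2').mp hmk.symm
      exact Submodule.mem_comap.mp this
    set z : M2 := ⟨(a:R) - s, hmem2⟩ with hzdef
    have hz := hlam z
    have hr : r = cr • (1:R) + (∑ i, d i • (u i : R)) + lam z • (t : R) := by
      have h1 : ((s : MM) : R) = ∑ i, d i • (u i : R) := by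
        rw [hsdef]
        simp
      have h2 : (z : R) = (a : R) - s := rfl
      have h3 : (lam z • t : M2) = z := hlam z
      have h4 : lam z • (t:R) = (a:R) - s := by
        rw [← h2, ← Subtype.ext_iff.mp h3]
        rfl
      rw [h4, ← h1]
      have : (a : R) = r - algebraMap ℂ R cr := rfl
      rw [this]
      rw [← Algebra.algebraMap_eq_smul_one cr]
      ring
    rw [hr]
    apply Submodule.add_mem
    apply Submodule.add_mem
    · exact Submodule.smul_mem _ _ (Submodule.subset_span (Or.inl (Or.inl rfl)))
    · apply Submodule.sum_mem
      intro i _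
      exact Submodule.smul_mem _ _ (Submodule.subset_span (Or.inl (Or.inr ⟨i, rfl⟩)))
    · exact Submodule.smul_mem _ _ (Submodule.subset_span (Or.inr rfl))

lemma main_iso (n : ℕ) (hn : 2 ≤ n) (R : Type) [CommRing R] [IsLocalRing R] [Algebra ℂ R]
    (hdim : Module.finrank ℂ R = n + 2)
    (hm2 : Module.finrank ℂ
      (Submodule.restrictScalars ℂ ((maximalIdeal R) ^ 2)) = 1)
    (hpair : ∀ x ∈ maximalIdeal R, x ∉ (maximalIdeal R) ^ 2 →
      ∃ y ∈ maximalIdeal R, x * y ≠ 0) :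
    Nonempty (R ≃ₐ[ℂ] Qalg n) := by
  haveI : Module.Finite ℂ R := by
    apply Module.finite_of_finrank_pos
    rw [hdim]; omega
  obtain ⟨t, x, ht0, ht2, hx, hxx, hspan⟩ := exists_good_family n hn R hdim hm2 hpair
    (hres_ax R) (hm3_ax R hm2)
  set φ : MvPolynomial (Fin n) ℂ →ₐ[ℂ] R := aeval x with hφ
  have hker : ∀ p ∈ Iq n, φ p = 0 := by
    intro p hp
    have hle : Iq n ≤ RingHom.ker φ := by
      rw [Iq, Ideal.span_le]
      rintro q (⟨i, j, hij, rfl⟩ | ⟨k, l, rfl⟩)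
      · rw [SetLike.mem_coe, RingHom.mem_ker, map_mul, hφ, aeval_X, aeval_X]
        rw [hxx i j, if_neg hij]
      · rw [SetLike.mem_coe, RingHom.mem_ker, map_sub, map_pow, map_pow, hφ, aeval_X, aeval_X]
        have hk : x k ^ 2 = t := by rw [pow_two, hxx k k, if_pos rfl]
        have hl : x l ^ 2 = t := by rw [pow_two, hxx l l, if_pos rfl]
        rw [hk, hl, sub_self]
    exact hle hp
  set ψ : Qalg n →ₐ[ℂ] R := Ideal.Quotient.liftₐ (Iq n) φ hker with hψ
  have hψmk : ∀ p, ψ (Ideal.Quotient.mkₐ ℂ (Iq n) p) = φ p := by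
    intro p
    exact DFunLike.congr_fun (Ideal.Quotient.liftₐ_comp (Iq n) φ hker) p
  have hsurj : Function.Surjective ψ := by
    intro r
    have hrange : r ∈ Subalgebra.toSubmodule φ.range := by
      have : (⊤ : Submodule ℂ R) ≤ Subalgebra.toSubmodule φ.range := by
        rw [← hspan, Submodule.span_le]
        rintro q (((rfl : q = 1) | ⟨i, rfl⟩) | (hq : q = t))
        · exact one_mem φ.range
        · exact ⟨X i, by show φ (X i) = x i; rw [hφ, aeval_X]⟩
        · rw [hq]
          refine ⟨X (⟨0, by omega⟩ : Fin n) * X (⟨0, by omega⟩ : Fin n), ?_⟩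
          show φ (X (⟨0, by omega⟩ : Fin n) * X (⟨0, by omega⟩ : Fin n)) = t
          rw [map_mul, hφ, aeval_X, hxx, if_pos rfl]
      exact this trivial
    obtain ⟨p, hp⟩ := hrange
    exact ⟨Ideal.Quotient.mkₐ ℂ (Iq n) p, by rw [hψmk]; exact hp⟩
  haveI : Module.Finite ℂ (Qalg n) := qalg_finite n hn
  have hinj : Function.Injective ψ := by
    have : Function.Injective (ψ.toLinearMap : Qalg n →ₗ[ℂ] R) → Function.Injective ψ :=
      fun h => h
    apply this
    rw [← LinearMap.ker_eq_bot (M := Qalg n) (f := ψ.toLinearMap)]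
    have h1 : LinearMap.range ψ.toLinearMap = ⊤ := LinearMap.range_eq_top.mpr hsurj
    have h2 := LinearMap.finrank_range_add_finrank_ker (ψ.toLinearMap : Qalg n →ₗ[ℂ] R)
    rw [h1, finrank_top, hdim] at h2
    have h3 := qalg_finrank_le n hn
    have h4 : Module.finrank ℂ (LinearMap.ker ψ.toLinearMap) = 0 := by omega
    exact Submodule.finrank_eq_zero.mp h4
  exact ⟨(AlgEquiv.ofBijective ψ ⟨hinj, hsurj⟩).symm⟩

theorem stmt11 (n : ℕ) (hn : 2 ≤ n) (R : Type) [CommRing R] [IsLocalRing R] [Algebra ℂ R]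
    (hdim : Module.finrank ℂ R = n + 2)
    (hm2 : Module.finrank ℂ
      (Submodule.restrictScalars ℂ ((IsLocalRing.maximalIdeal R) ^ 2)) = 1)
    (hpair : ∀ x ∈ IsLocalRing.maximalIdeal R, x ∉ (IsLocalRing.maximalIdeal R) ^ 2 →
      ∃ y ∈ IsLocalRing.maximalIdeal R, x * y ≠ 0) :
    Nonempty (R ≃ₐ[ℂ] Qalg n) ∧
    ∀ (R' : Type) [CommRing R'] [IsLocalRing R'] [Algebra ℂ R'],
      Module.finrank ℂ R' = n + 2 →
      Module.finrank ℂ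
        (Submodule.restrictScalars ℂ ((IsLocalRing.maximalIdeal R') ^ 2)) = 1 →
      (∀ x ∈ IsLocalRing.maximalIdeal R', x ∉ (IsLocalRing.maximalIdeal R') ^ 2 →
        ∃ y ∈ IsLocalRing.maximalIdeal R', x * y ≠ 0) →
      Nonempty (R ≃ₐ[ℂ] R') := by
  refine ⟨main_iso n hn R hdim hm2 hpair, ?_⟩
  intro R' _ _ _ hdim' hm2' hpair'
  obtain ⟨e⟩ := main_iso n hn R hdim hm2 hpair
  obtain ⟨e'⟩ := main_iso n hn R' hdim' hm2' hpair'
  exact ⟨e.trans e'.symm⟩
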